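/- For every natural number k, there is at most one odd positive integer n with φ(n) = 2^k. -/

import Mathlib

open Nat Finset

lemma sum_two_pow_inj {S T : Finset ℕ} (h : ∑ b ∈ S, 2^b = ∑ b ∈ T, 2^b) : S = T := by
  have key : ∀ U : Finset ℕ, ((U.sort (· ≤ ·)).map (fun i => 2^i)).sum = ∑ b ∈ U, 2^b := by
    intro U
    rw [← Finset.sum_map_toList]
    exact List.Perm.sum_eq ((U.sort_perm_toList (· ≤ ·)).map _)
  have h1 := Nat.bitIndices_twoPowsum (L := S.sort (· ≤ ·)) (S.sortedLT_sort)
  have h2 := Nat.bitIndices_twoPowsum (L := T.sort (· ≤ ·)) (T.sortedLT_sort)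
  rw [key, h] at h1
  rw [key] at h2
  have : S.sort (· ≤ ·) = T.sort (· ≤ ·) := h1.symm.trans h2
  rw [← Finset.sort_toFinset S (· ≤ ·), ← Finset.sort_toFinset T (· ≤ ·), this]

lemma totient_squarefree {n : ℕ} (hn : Squarefree n) :
    Nat.totient n = ∏ p ∈ n.primeFactors, (p - 1) := by
  rw [Nat.totient_eq_prod_factorization hn.ne_zero, Finsupp.prod, Nat.support_factorization]
  refine Finset.prod_congr rfl fun p hp => ?_
  have h1 : n.factorization p = 1 := by
    have := (Nat.squarefree_iff_factorization_le_one hn.ne_zero).mp hn p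
    have h0 : n.factorization p ≠ 0 := by
      rw [← Finsupp.mem_support_iff, Nat.support_factorization]; exact hp
    omega
  rw [h1]; simp

lemma aux {n k : ℕ} (hn : 0 < n) (ho : Odd n) (ht : Nat.totient n = 2 ^ k) :
    Squarefree n ∧ (∀ p ∈ n.primeFactors, 2^(2^(Nat.log 2 (Nat.log 2 (p-1)))) + 1 = p) ∧
      ∑ p ∈ n.primeFactors, 2^(Nat.log 2 (Nat.log 2 (p-1))) = k := by
  have hsq : Squarefree n := by
    refine Nat.squarefree_of_factorization_le_one hn.ne' fun p => ?_
    by_contra hle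
    push_neg at hle
    have hp : p.Prime := by
      by_contra hnp
      rw [Nat.factorization_eq_zero_of_not_prime n hnp] at hle
      omega
    have hdvd : p ^ 2 ∣ n := (Nat.Prime.pow_dvd_iff_le_factorization hp hn.ne').mpr hle
    have : Nat.totient (p^2) ∣ 2 ^ k := ht ▸ Nat.totient_dvd_of_dvd hdvd
    rw [Nat.totient_prime_pow hp (by norm_num)] at this
    have hpd : p ∣ 2 ^ k := dvd_trans (by simpa using Dvd.intro_left _ rfl) this
    have : p = 2 := (Nat.prime_dvd_prime_iff_eq hp Nat.prime_two).mp (hp.dvd_of_dvd_pow hpd)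
    subst this
    have : 2 ∣ n := dvd_trans (dvd_pow_self 2 two_ne_zero) hdvd
    rw [Nat.odd_iff] at ho
    omega
  have h2 : ∀ p ∈ n.primeFactors, 2^(2^(Nat.log 2 (Nat.log 2 (p-1)))) + 1 = p := by
    intro p hmem
    have hp := Nat.prime_of_mem_primeFactors hmem
    have hpd : p ∣ n := Nat.dvd_of_mem_primeFactors hmem
    have hne2 : p ≠ 2 := by
      rintro rfl
      rw [Nat.odd_iff] at ho
      omega
    have hdvd : p - 1 ∣ 2 ^ k := by
      rw [← ht, ← Nat.totient_prime hp]
      exact Nat.totient_dvd_of_dvd hpd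
    obtain ⟨a, hak, ha⟩ := (Nat.dvd_prime_pow Nat.prime_two).mp hdvd
    have hp3 : 3 ≤ p := by have := hp.two_le; omega
    have ha0 : a ≠ 0 := by rintro rfl; simp at ha; omega
    have hpa : 2 ^ a + 1 = p := by omega
    obtain ⟨b, hb⟩ := Nat.pow_of_pow_add_prime one_lt_two ha0 (hpa ▸ hp)
    rw [ha, Nat.log_pow one_lt_two, hb, Nat.log_pow one_lt_two, ← hb, ← ha]
    omega
  refine ⟨hsq, h2, ?_⟩
  have hprod : ∏ p ∈ n.primeFactors, (p - 1) = 2 ^ k := by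
    rw [← totient_squarefree hsq, ht]
  have hprod2 : ∏ p ∈ n.primeFactors, (p - 1)
      = ∏ p ∈ n.primeFactors, 2 ^ (2 ^ (Nat.log 2 (Nat.log 2 (p-1)))) := by
    refine Finset.prod_congr rfl fun p hp => ?_
    rw [← h2 p hp]
    simp only [Nat.add_sub_cancel, Nat.log_pow one_lt_two]
  rw [hprod2, Finset.prod_pow_eq_pow_sum] at hprod
  exact Nat.pow_right_injective (le_refl 2) hprod

theorem at_most_one_odd_totient_pow_two (k : ℕ) :
    ∀ n₁ n₂ : ℕ, 0 < n₁ → Odd n₁ → Nat.totient n₁ = 2 ^ k →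
      0 < n₂ → Odd n₂ → Nat.totient n₂ = 2 ^ k → n₁ = n₂ := by
  intro n₁ n₂ h1 o1 t1 h2 o2 t2
  obtain ⟨sq1, hF1, hs1⟩ := aux h1 o1 t1
  obtain ⟨sq2, hF2, hs2⟩ := aux h2 o2 t2
  set g : ℕ → ℕ := fun p => Nat.log 2 (Nat.log 2 (p-1)) with hg
  have hinj1 : ∀ x ∈ n₁.primeFactors, ∀ y ∈ n₁.primeFactors, g x = g y → x = y := by
    intro x hx y hy hxy
    have hxy' : Nat.log 2 (Nat.log 2 (x-1)) = Nat.log 2 (Nat.log 2 (y-1)) := hxy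
    rw [← hF1 x hx, ← hF1 y hy, hxy']
  have hinj2 : ∀ x ∈ n₂.primeFactors, ∀ y ∈ n₂.primeFactors, g x = g y → x = y := by
    intro x hx y hy hxy
    have hxy' : Nat.log 2 (Nat.log 2 (x-1)) = Nat.log 2 (Nat.log 2 (y-1)) := hxy
    rw [← hF2 x hx, ← hF2 y hy, hxy']
  have hT : n₁.primeFactors.image g = n₂.primeFactors.image g := by
    apply sum_two_pow_inj
    rw [Finset.sum_image hinj1, Finset.sum_image hinj2, hs1, hs2]
  have e : ∀ (m : ℕ), (∀ p ∈ m.primeFactors, 2^(2^(g p)) + 1 = p) →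
      (m.primeFactors.image g).image (fun b => 2^(2^b)+1) = m.primeFactors := by
    intro m hm
    rw [Finset.image_image]
    calc m.primeFactors.image ((fun b => 2^(2^b)+1) ∘ g)
        = m.primeFactors.image id := Finset.image_congr fun p hp => hm p hp
      _ = m.primeFactors := Finset.image_id
  have hS : n₁.primeFactors = n₂.primeFactors := by
    rw [← e n₁ hF1, ← e n₂ hF2, hT]
  rw [← Nat.prod_primeFactors_of_squarefree sq1, ← Nat.prod_primeFactors_of_squarefree sq2, hS]
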